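/- Let u_ε : ∂Ω^ε → ℝ be functions and Φ_ε : ∂Ω → ∂Ω^ε diffeomorphisms with Jacobians |JΦ_ε| → 1 uniformly, such that u_ε ∘ Φ_ε → u in L¹(∂Ω) and surface measures σ_ε(Φ_ε(B)) → σ(B) for each pseudoball B ⊆ ∂Ω with σ(B) > 0. Then for each pseudoball B(ξ,t), the averages satisfy ⨍_{Φ_ε(B(ξ,t))} u_ε dσ_ε → ⨍_{B(ξ,t)} u dσ, and consequently ∫_{B(ξ,t)} |u - ⨍_{B(ξ,t)} u| dσ ≤ liminf_ε ∫_{Φ_ε(B(ξ,t))} |u_ε - ⨍ u_ε| dσ_ε. In particular ‖u‖_{BMO(∂Ω)} ≤ C sup_ε ‖u_ε‖_{BMO_ε(∂Ω^ε)}. -/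

import Mathlib

open MeasureTheory Filter Topology

private lemma core_aux {X : Type*} [MeasurableSpace X] (μ : Measure X) [IsFiniteMeasure μ]
    (f : X → ℝ) (hf : Integrable f μ) (g : ℕ → X → ℝ) (hg : ∀ n, Integrable (g n) μ)
    (J : ℕ → X → ℝ) (hJm : ∀ n, Measurable (J n))
    (hJ : TendstoUniformly J (fun _ => (1:ℝ)) atTop)
    (hL : Tendsto (fun n => ∫ x, |g n x - f x| ∂μ) atTop (𝓝 0)) :
    Tendsto (fun n => ∫ x, g n x * J n x ∂μ) atTop (𝓝 (∫ x, f x ∂μ)) := by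
  rw [Metric.tendsto_atTop]
  intro ε hε
  set A := ∫ x, |f x| ∂μ with hA
  have hA0 : 0 ≤ A := integral_nonneg fun x => abs_nonneg _
  set ε1 := ε / (2 * (A + 1)) with hε1def
  have hε1 : 0 < ε1 := by positivity
  have h1 : ∀ᶠ n in atTop, ∀ x, dist (1:ℝ) (J n x) < min ε1 1 :=
    (Metric.tendstoUniformly_iff.mp hJ) (min ε1 1) (by positivity)
  have h2 : ∀ᶠ n in atTop, ∫ x, |g n x - f x| ∂μ < ε / 4 := by
    have := Metric.tendsto_atTop.mp hL (ε / 4) (by positivity)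
    obtain ⟨N, hN⟩ := this
    refine eventually_atTop.2 ⟨N, fun n hn => ?_⟩
    have := hN n hn
    rw [Real.dist_eq, sub_zero] at this
    exact lt_of_le_of_lt (le_abs_self _) this
  obtain ⟨N, hN⟩ := eventually_atTop.1 (h1.and h2)
  refine ⟨N, fun n hn => ?_⟩
  obtain ⟨hn1, hn2⟩ := hN n hn
  have hJ1 : ∀ x, |J n x - 1| ≤ ε1 := fun x => by
    have := hn1 x; rw [Real.dist_eq, abs_sub_comm] at this
    exact le_of_lt (lt_of_lt_of_le this (min_le_left _ _))
  have hJ2 : ∀ x, |J n x| ≤ 2 := fun x => by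
    have h := hn1 x; rw [Real.dist_eq, abs_sub_comm] at h
    have : |J n x - 1| ≤ 1 := le_of_lt (lt_of_lt_of_le h (min_le_right _ _))
    calc |J n x| = |(J n x - 1) + 1| := by ring_nf
    _ ≤ |J n x - 1| + |(1:ℝ)| := abs_add_le _ _
    _ ≤ 2 := by rw [abs_one]; linarith
  have hgJ : Integrable (fun x => g n x * J n x) μ := by
    refine Integrable.mono ((hg n).const_mul 2)
      ((hg n).aestronglyMeasurable.mul (hJm n).aestronglyMeasurable) ?_
    filter_upwards with x
    simp only [norm_mul, Real.norm_eq_abs]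
    rw [abs_two]
    nlinarith [abs_nonneg (g n x), hJ2 x, abs_nonneg (J n x)]
  have key : |∫ x, g n x * J n x ∂μ - ∫ x, f x ∂μ| ≤ 2 * (∫ x, |g n x - f x| ∂μ) + ε1 * A := by
    rw [← integral_sub hgJ hf]
    have step1 : |∫ x, (g n x * J n x - f x) ∂μ| ≤ ∫ x, |g n x * J n x - f x| ∂μ :=
      by simpa [Real.norm_eq_abs] using
        norm_integral_le_integral_norm (μ := μ) (fun x => g n x * J n x - f x)
    have step2 : ∫ x, |g n x * J n x - f x| ∂μ
        ≤ ∫ x, (|g n x - f x| * 2 + |f x| * ε1) ∂μ := by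
      have i1 : Integrable (fun x => |g n x - f x| * 2) μ := by
        exact (((hg n).sub hf).abs).mul_const 2
      have i2 : Integrable (fun x => |f x| * ε1) μ := hf.abs.mul_const ε1
      refine integral_mono (hgJ.sub hf).abs ?_ ?_
      · exact i1.add i2
      · intro x
        have hrw : g n x * J n x - f x = (g n x - f x) * J n x + f x * (J n x - 1) := by ring
        calc |g n x * J n x - f x|
            = |(g n x - f x) * J n x + f x * (J n x - 1)| := by rw [hrw]
          _ ≤ |(g n x - f x) * J n x| + |f x * (J n x - 1)| := abs_add_le _ _
          _ = |g n x - f x| * |J n x| + |f x| * |J n x - 1| := by rw [abs_mul, abs_mul]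
          _ ≤ |g n x - f x| * 2 + |f x| * ε1 := by
              gcongr
              exacts [hJ2 x, hJ1 x]
    have step3 : ∫ x, (|g n x - f x| * 2 + |f x| * ε1) ∂μ
        = 2 * (∫ x, |g n x - f x| ∂μ) + ε1 * A := by
      have i1 : Integrable (fun x => |g n x - f x| * 2) μ := by
        exact (((hg n).sub hf).abs).mul_const 2
      have i2 : Integrable (fun x => |f x| * ε1) μ := hf.abs.mul_const ε1
      rw [integral_add i1 i2, integral_mul_const, integral_mul_const]
      ring
    linarith
  rw [Real.dist_eq]
  have : ε1 * A < ε / 2 := by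
    have : ε1 * (A + 1) = ε / 2 := by rw [hε1def, div_mul_eq_mul_div, div_eq_iff (ne_of_gt (by linarith))]; ring
    nlinarith
  linarith

private lemma main_aux {X : Type*} [MeasurableSpace X] (σ : Measure X) [IsFiniteMeasure σ]
    (u : X → ℝ) (hu : Integrable u σ) (v J : ℕ → X → ℝ)
    (hv : ∀ n, Integrable (v n) σ) (hJ_meas : ∀ n, Measurable (J n))
    (hJ_unif : TendstoUniformly J (fun _ => (1:ℝ)) atTop)
    (hL1 : Tendsto (fun n => ∫ x, |v n x - u x| ∂σ) atTop (𝓝 0))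
    (B : Set X) (hBpos : 0 < σ B) :
    Tendsto (fun n => (∫ x in B, v n x * J n x ∂σ) / (∫ x in B, J n x ∂σ)) atTop
      (𝓝 ((∫ x in B, u x ∂σ) / (σ B).toReal)) ∧
    Tendsto (fun n => ∫ x in B,
        |v n x - (∫ y in B, v n y * J n y ∂σ) / (∫ y in B, J n y ∂σ)| * J n x ∂σ) atTop
      (𝓝 (∫ x in B, |u x - (∫ y in B, u y ∂σ) / (σ B).toReal| ∂σ)) ∧
    Tendsto (fun n => ∫ x in B, J n x ∂σ) atTop (𝓝 ((σ B).toReal)) := by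
  have hSB : 0 < (σ B).toReal := ENNReal.toReal_pos hBpos.ne' (measure_ne_top σ B)
  have hLB : Tendsto (fun n => ∫ x in B, |v n x - u x| ∂σ) atTop (𝓝 0) := by
    refine squeeze_zero (fun n => integral_nonneg fun x => abs_nonneg _) (fun n => ?_) hL1
    exact setIntegral_le_integral ((hv n).sub hu).abs
      (Filter.Eventually.of_forall fun x => abs_nonneg _)
  have hden : Tendsto (fun n => ∫ x in B, J n x ∂σ) atTop (𝓝 ((σ B).toReal)) := by
    have := core_aux (σ.restrict B) (fun _ => (1:ℝ)) (integrable_const 1)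
      (fun _ _ => (1:ℝ)) (fun n => integrable_const 1) J hJ_meas hJ_unif
      (by simp)
    simpa [Measure.real] using this
  have hnum : Tendsto (fun n => ∫ x in B, v n x * J n x ∂σ) atTop
      (𝓝 (∫ x in B, u x ∂σ)) :=
    core_aux (σ.restrict B) u hu.restrict v (fun n => (hv n).restrict) J hJ_meas hJ_unif hLB
  have part1 := hnum.div hden hSB.ne'
  refine ⟨part1, ?_, hden⟩
  set a := (∫ y in B, u y ∂σ) / (σ B).toReal with ha
  set aN : ℕ → ℝ := fun n => (∫ y in B, v n y * J n y ∂σ) / (∫ y in B, J n y ∂σ) with haN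
  have han : Tendsto aN atTop (𝓝 a) := part1
  have hL' : Tendsto (fun n => ∫ x in B, |(|v n x - aN n| - |u x - a|)| ∂σ) atTop (𝓝 0) := by
    refine squeeze_zero (fun n => integral_nonneg fun x => abs_nonneg _)
      (fun n => ?_)
      (by simpa using hLB.add (((han.sub_const a).abs.mul_const (σ B).toReal)))
    have i1 : Integrable (fun x => |v n x - u x| + |aN n - a|) (σ.restrict B) :=
      ((hv n).restrict.sub hu.restrict).abs.add (integrable_const _)
    have i0 : Integrable (fun x => |(|v n x - aN n| - |u x - a|)|) (σ.restrict B) := by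
      exact (((hv n).restrict.sub (integrable_const _)).abs.sub
        (hu.restrict.sub (integrable_const _)).abs).abs
    calc ∫ x in B, |(|v n x - aN n| - |u x - a|)| ∂σ
        ≤ ∫ x in B, (|v n x - u x| + |aN n - a|) ∂σ := by
          refine integral_mono i0 i1 fun x => ?_
          calc |(|v n x - aN n| - |u x - a|)|
              ≤ |(v n x - aN n) - (u x - a)| := abs_abs_sub_abs_le_abs_sub _ _
            _ = |(v n x - u x) - (aN n - a)| := by ring_nf
            _ ≤ |v n x - u x| + |aN n - a| := abs_sub _ _
      _ = (∫ x in B, |v n x - u x| ∂σ) + |aN n - a| * (σ B).toReal := by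
          have i2 : Integrable (fun x => |v n x - u x|) (σ.restrict B) := by
            exact ((hv n).restrict.sub hu.restrict).abs
          rw [integral_add i2 (integrable_const _), integral_const]
          simp [mul_comm, Measure.real]
  have := core_aux (σ.restrict B) (fun x => |u x - a|)
    ((hu.restrict.sub (integrable_const a)).abs)
    (fun n x => |v n x - aN n|)
    (fun n => ((hv n).restrict.sub (integrable_const _)).abs)
    J hJ_meas hJ_unif hL'
  exact this

/-- Stability of BMO under approximation by smoothed boundary values via
diffeomorphisms `Φ_ε : ∂Ω → ∂Ω^ε`, formulated on the fixed boundary `X = ∂Ω`: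
`v n = u_ε ∘ Φ_ε`, `J n = |JΦ_ε|` are the Jacobians (converging uniformly to 1),
and `v n → u` in `L¹(σ)`.  The transported averages
`⨍_{Φ_ε(B)} u_ε dσ_ε = (∫_B v n J n dσ)/(∫_B J n dσ)` converge to `⨍_B u dσ`,
the mean oscillation of `u` on `B` is bounded by the liminf of the transported
mean oscillations, and consequently `‖u‖_{BMO} ≤ C sup_ε ‖u_ε‖_{BMO_ε}`. -/
theorem stmt_14 {X : Type*} [MeasurableSpace X] (σ : Measure X) [IsFiniteMeasure σ]
    (u : X → ℝ) (hu : Integrable u σ)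
    (v J : ℕ → X → ℝ)
    (hv : ∀ n, Integrable (v n) σ)
    (hJ_meas : ∀ n, Measurable (J n))
    (hJ_pos : ∀ n x, 0 < J n x)
    (hJ_unif : TendstoUniformly J (fun _ => (1:ℝ)) atTop)
    (hL1 : Tendsto (fun n => ∫ x, |v n x - u x| ∂σ) atTop (𝓝 0))
    (𝔅 : Set (Set X))
    (h𝔅 : ∀ B ∈ 𝔅, MeasurableSet B ∧ 0 < σ B) :
    (∀ B ∈ 𝔅, Tendsto
        (fun n => (∫ x in B, v n x * J n x ∂σ) / (∫ x in B, J n x ∂σ)) atTop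
        (𝓝 ((∫ x in B, u x ∂σ) / (σ B).toReal))) ∧
    (∀ B ∈ 𝔅,
      (∫ x in B, |u x - (∫ y in B, u y ∂σ) / (σ B).toReal| ∂σ)
        ≤ liminf (fun n => ∫ x in B,
            |v n x - (∫ y in B, v n y * J n y ∂σ) / (∫ y in B, J n y ∂σ)| * J n x ∂σ)
          atTop) ∧
    (∃ C : ℝ, 0 < C ∧ ∀ M : ℝ, 0 ≤ M →
      (∀ n, ∀ B ∈ 𝔅,
        (∫ x in B, |v n x - (∫ y in B, v n y * J n y ∂σ) / (∫ y in B, J n y ∂σ)| * J n x ∂σ)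
          ≤ M * (∫ x in B, J n x ∂σ)) →
      ∀ B ∈ 𝔅,
        (∫ x in B, |u x - (∫ y in B, u y ∂σ) / (σ B).toReal| ∂σ)
          ≤ C * M * (σ B).toReal) := by
  refine ⟨fun B hB => (main_aux σ u hu v J hv hJ_meas hJ_unif hL1 B (h𝔅 B hB).2).1,
    fun B hB => ?_, 1, one_pos, fun M hM hyp B hB => ?_⟩
  · have h := (main_aux σ u hu v J hv hJ_meas hJ_unif hL1 B (h𝔅 B hB).2).2.1
    exact (h.liminf_eq).symm.le
  · have h := main_aux σ u hu v J hv hJ_meas hJ_unif hL1 B (h𝔅 B hB).2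
    rw [one_mul]
    exact le_of_tendsto_of_tendsto' h.2.1 (h.2.2.const_mul M) (fun n => hyp n B hB)
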